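/- For all integers k ≥ 2, ∑_{i=1}^{k-1} C(k,i) · [1/2]_i · [1/2]_{k-i} = 2 · [1/2]_k, where [1/2]_n = |(1/2)_n| is the absolute value of the falling factorial of 1/2. -/

import Mathlib

/-- `ffHalf n = |(1/2)_n|`, the absolute value of the falling factorial of `1/2`. -/
noncomputable def ffHalf (n : ℕ) : ℝ := |(descPochhammer ℝ n).eval (1/2 : ℝ)|

private lemma smeval_desc (n : ℕ) (x : ℝ) :
    (descPochhammer ℤ n).smeval x = (descPochhammer ℝ n).eval x := by
  rw [← Polynomial.aeval_eq_smeval, Polynomial.aeval_def, Polynomial.eval₂_eq_eval_map,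
    descPochhammer_map (algebraMap ℤ ℝ)]

private lemma sign_desc : ∀ n : ℕ, 1 ≤ n →
    (descPochhammer ℝ n).eval (1/2 : ℝ) = (-1 : ℝ)^(n-1) * ffHalf n := by
  intro n hn
  obtain ⟨m, rfl⟩ : ∃ m, n = m + 1 := ⟨n - 1, by omega⟩
  induction m with
  | zero =>
    simp only [zero_add, descPochhammer_one, Polynomial.eval_X, pow_zero, one_mul, ffHalf]
    rw [abs_of_pos] <;> norm_num
  | succ m ih =>
    have ih' := ih (by omega)
    have hstep : (descPochhammer ℝ (m+2)).eval (1/2 : ℝ)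
        = (descPochhammer ℝ (m+1)).eval (1/2 : ℝ) * (1/2 - (m+1 : ℝ)) := by
      have := descPochhammer_succ_eval (S := ℝ) (m+1) (1/2 : ℝ)
      simpa using this
    have hneg : (1/2 - (m+1 : ℝ)) < 0 := by
      have : (0:ℝ) ≤ (m:ℝ) := Nat.cast_nonneg m
      linarith
    have habs : ffHalf (m+2) = ffHalf (m+1) * ((m+1 : ℝ) - 1/2) := by
      rw [ffHalf, hstep, abs_mul, abs_of_neg hneg, ffHalf]
      ring
    rw [hstep, ih', habs]
    simp only [Nat.add_sub_cancel]
    ring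

private lemma ffHalf_pos : ∀ n : ℕ, 0 < ffHalf n := by
  intro n
  induction n with
  | zero => simp [ffHalf]
  | succ n ih =>
    have hstep : (descPochhammer ℝ (n+1)).eval (1/2 : ℝ)
        = (descPochhammer ℝ n).eval (1/2 : ℝ) * (1/2 - (n : ℝ)) := by
      simpa using descPochhammer_succ_eval (S := ℝ) n (1/2 : ℝ)
    have hne : (1/2 - (n : ℝ)) ≠ 0 := by
      rcases Nat.eq_zero_or_pos n with h | h
      · subst h; norm_num
      · have : (1:ℝ) ≤ (n:ℝ) := by exact_mod_cast h
        intro h0; linarith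
    rw [ffHalf, hstep, abs_mul]
    exact mul_pos ih (abs_pos.mpr hne)

theorem ffHalf_convolution_id2 (k : ℕ) (hk : 2 ≤ k) :
    ∑ i ∈ Finset.Icc 1 (k - 1), (k.choose i : ℝ) * ffHalf i * ffHalf (k - i)
      = 2 * ffHalf k := by
  obtain ⟨m, rfl⟩ : ∃ m, k = m + 2 := ⟨k - 2, by omega⟩
  set K := m + 2 with hK
  set e : ℕ → ℝ := fun n => (descPochhammer ℝ n).eval (1/2 : ℝ) with he
  -- Chu-Vandermonde with r = s = 1/2
  have hvan := Ring.descPochhammer_smeval_add (R := ℝ) (r := (1/2 : ℝ)) (s := (1/2 : ℝ)) K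
    (Commute.refl _)
  have hhalf : (1/2 : ℝ) + 1/2 = ((1:ℕ) : ℝ) := by norm_num
  have hzero : (descPochhammer ℤ K).smeval ((1/2 : ℝ) + 1/2) = 0 := by
    rw [hhalf, smeval_desc, descPochhammer_eval_eq_descFactorial ℝ 1 K]
    have : Nat.descFactorial 1 K = 0 := by
      rw [Nat.descFactorial_eq_zero_iff_lt]; omega
    rw [this, Nat.cast_zero]
  rw [hzero] at hvan
  -- rewrite smeval as e
  simp only [smeval_desc, ← he] at hvan
  -- convert antidiagonal sum to range sum
  rw [Finset.Nat.sum_antidiagonal_eq_sum_range_succ_mk] at hvan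
  set g : ℕ → ℝ := fun i => (K.choose i : ℝ) * (e i * e (K - i)) with hg
  have hsplit : ∑ i ∈ Finset.range (K + 1), g i
      = g 0 + (∑ i ∈ Finset.Icc 1 (K - 1), g i) + g K := by
    rw [Finset.sum_range_succ, Finset.sum_range_succ']
    have : ∑ i ∈ Finset.Icc 1 (K - 1), g i = ∑ i ∈ Finset.range (m + 1), g (i + 1) := by
      rw [show Finset.Icc 1 (K - 1) = Finset.Ico 1 (m + 2) by
        rw [show Finset.Ico 1 (m + 2) = Finset.Icc 1 (m + 1) by exact Finset.Ico_add_one_right_eq_Icc (a := 1) (b := m + 1), show K - 1 = m + 1 from rfl], Finset.sum_Ico_eq_sum_range]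
      simp [add_comm]
    rw [this]
    ring
  rw [hsplit] at hvan
  have hg0 : g 0 = e K := by simp [hg, he]
  have hgK : g K = e K := by simp [hg, he]
  rw [hg0, hgK] at hvan
  -- hvan : 0 = e K + ∑ + e K
  have hsum : ∑ i ∈ Finset.Icc 1 (K - 1), g i = -2 * e K := by linarith
  have heK : e K = (-1 : ℝ)^(K - 1) * ffHalf K := sign_desc K (by omega)
  -- rewrite each term of sum
  have hterm : ∀ i ∈ Finset.Icc 1 (K - 1),
      g i = (-1 : ℝ)^K * ((K.choose i : ℝ) * ffHalf i * ffHalf (K - i)) := by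
    intro i hi
    simp only [Finset.mem_Icc] at hi
    rw [hg]
    rw [he]
    simp only
    rw [sign_desc i hi.1, sign_desc (K - i) (by omega)]
    rw [show (-1:ℝ)^(i-1) * ffHalf i * ((-1:ℝ)^(K - i - 1) * ffHalf (K - i))
        = (-1:ℝ)^((i-1) + (K - i - 1)) * (ffHalf i * ffHalf (K - i)) by
      rw [pow_add]; ring]
    rw [show (i - 1) + (K - i - 1) = K - 2 by omega]
    rw [show (-1:ℝ)^(K-2) = (-1:ℝ)^K by
      rw [show K = (K - 2) + 2 by omega, pow_add]; norm_num]
    ring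
  rw [Finset.sum_congr rfl hterm, ← Finset.mul_sum, heK] at hsum
  have hKsign : (-1:ℝ)^(K-1) = -(-1:ℝ)^K := by
    rw [show K = (K - 1) + 1 by omega, pow_succ]
    simp
  rw [hKsign] at hsum
  have hne : ((-1:ℝ)^K) ≠ 0 := by
    apply pow_ne_zero; norm_num
  refine mul_left_cancel₀ hne ?_
  rw [hsum]; ring
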